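/- arXiv:1411.4301 — 6 statements merged into one kernel-verified Lean document; each statement's English description precedes it below -/
import Mathlib

section
/- Let (W, φ) be a projective isometric operator-valued system of imprimitivity of (S, Σ) on a complex Banach space X with multiplier ω, and let (V, ρ, Q, T) be a dilation system of (W, φ) on a complex Banach space Z. Then the closed subspace Y = closure(Q(Z)) of X is invariant under (W, φ), i.e. W_s Y ⊆ Y and φ(E) Y ⊆ Y for all s ∈ S and E ∈ Σ, and the pair of restrictions (W_s|_Y, φ(E)|_Y) is a projective isometric operator-valued system of imprimitivity of (S, Σ) on Y with the same multiplier ω. -/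
/-- If `(V, ρ, Q, T)` is a dilation system of a projective isometric
operator-valued system of imprimitivity `(W, φ)` on `X`, then the closed subspace
`Y = closure (Q(Z))` of `X` is invariant under `(W, φ)`, and the restrictions form a
projective isometric operator-valued system of imprimitivity on `Y` with the same
multiplier. -/
theorem restriction_to_closure_of_range_of_dilation
    {Ω : Type*} [MeasurableSpace Ω]
    {S : Type*} [Monoid S]
    -- a Σ-measurable S-space
    (act : S → Set Ω → Set Ω)
    (hact_meas : ∀ s (E : Set Ω), MeasurableSet E → MeasurableSet (act s E))
    (hact_mul : ∀ s t (E : Set Ω), MeasurableSet E → act s (act t E) = act (s * t) E)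
    (hact_one : ∀ E : Set Ω, MeasurableSet E → act 1 E = E)
    (hact_empty : ∀ s, act s (∅ : Set Ω) = ∅)
    (hact_univ : ∀ s, act s (Set.univ : Set Ω) = Set.univ)
    (hact_iUnion : ∀ s (E : ℕ → Set Ω), (∀ n, MeasurableSet (E n)) →
      act s (⋃ n, E n) = ⋃ n, act s (E n))
    (hact_iInter : ∀ s (E : ℕ → Set Ω), (∀ n, MeasurableSet (E n)) →
      act s (⋂ n, E n) = ⋂ n, act s (E n))
    {X : Type*} [NormedAddCommGroup X] [NormedSpace ℂ X] [CompleteSpace X]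
    {Z : Type*} [NormedAddCommGroup Z] [NormedSpace ℂ Z] [CompleteSpace Z]
    -- a multiplier ω on S
    (ω : S → S → ℂ)
    (hω_norm : ∀ s t, ‖ω s t‖ = 1)
    (hω_one : ∀ s, ω 1 s = 1 ∧ ω s 1 = 1)
    (hω_cocycle : ∀ s t u, ω s t * ω (s * t) u = ω s (t * u) * ω t u)
    -- a projective isometric operator-valued system of imprimitivity (W, φ) on X
    (W : S → X →L[ℂ] X)
    (hW_iso : ∀ s (x : X), ‖W s x‖ = ‖x‖)
    (hW_one : W 1 = ContinuousLinearMap.id ℂ X)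
    (hW_mul : ∀ s t, (W s).comp (W t) = ω s t • W (s * t))
    (φ : Set Ω → X →L[ℂ] X)
    (hφ_add : ∀ B : ℕ → Set Ω, (∀ i, MeasurableSet (B i)) → Pairwise (Function.onFun Disjoint B) →
      ∀ x : X, HasSum (fun i => φ (B i) x) (φ (⋃ i, B i) x))
    (hcov : ∀ s (E : Set Ω), MeasurableSet E → (W s).comp (φ E) = (φ (act s E)).comp (W s))
    -- a dilation system (V, ρ, Q, T) of (W, φ) on Z
    (V : S → Z →L[ℂ] Z)
    (hV_iso : ∀ s (z : Z), ‖V s z‖ = ‖z‖)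
    (hV_one : V 1 = ContinuousLinearMap.id ℂ Z)
    (hV_mul : ∀ s t, (V s).comp (V t) = ω s t • V (s * t))
    (ρ : Set Ω → Z →L[ℂ] Z)
    (hρ_add : ∀ B : ℕ → Set Ω, (∀ i, MeasurableSet (B i)) → Pairwise (Function.onFun Disjoint B) →
      ∀ z : Z, HasSum (fun i => ρ (B i) z) (ρ (⋃ i, B i) z))
    (hρ_spectral : ∀ A B : Set Ω, MeasurableSet A → MeasurableSet B →
      ρ (A ∩ B) = (ρ A).comp (ρ B))
    (hVρ_cov : ∀ s (E : Set Ω), MeasurableSet E → (V s).comp (ρ E) = (ρ (act s E)).comp (V s))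
    (Q : Z →L[ℂ] X) (T : X →L[ℂ] Z)
    (hdil : ∀ E : Set Ω, MeasurableSet E → φ E = (Q.comp (ρ E)).comp T)
    (hQV : ∀ s, Q.comp (V s) = (W s).comp Q)
    (hVT : ∀ s, (V s).comp T = T.comp (W s)) :
    -- Y = closure (Q(Z))
    ∀ Y : Set X, Y = closure (Set.range Q) →
      -- Y is invariant under W
      (∀ s, ∀ y ∈ Y, W s y ∈ Y) ∧
      -- Y is invariant under φ
      (∀ E : Set Ω, MeasurableSet E → ∀ y ∈ Y, φ E y ∈ Y) ∧
      -- the restriction of W is a projective isometric representation with multiplier ω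
      (∀ s, ∀ y ∈ Y, ‖W s y‖ = ‖y‖) ∧
      (∀ y ∈ Y, W 1 y = y) ∧
      (∀ s t, ∀ y ∈ Y, W s (W t y) = ω s t • W (s * t) y) ∧
      -- the restriction of φ is still countably additive (a B(Y)-valued measure)
      (∀ B : ℕ → Set Ω, (∀ i, MeasurableSet (B i)) → Pairwise (Function.onFun Disjoint B) →
        ∀ y ∈ Y, HasSum (fun i => φ (B i) y) (φ (⋃ i, B i) y)) ∧
      -- the restricted covariance relation
      (∀ s (E : Set Ω), MeasurableSet E → ∀ y ∈ Y, W s (φ E y) = φ (act s E) (W s y)) := by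

  intro Y hY
  have hmap : ∀ (A : X →L[ℂ] X), (∀ z : Z, A (Q z) ∈ Set.range Q) →
      ∀ y ∈ Y, A y ∈ Y := by
    intro A hA y hy
    rw [hY] at hy ⊢
    have h1 : A '' closure (Set.range Q) ⊆ closure (A '' Set.range Q) :=
      image_closure_subset_closure_image A.continuous
    have h2 : closure (A '' Set.range Q) ⊆ closure (Set.range Q) := by
      apply closure_mono
      rintro _ ⟨_, ⟨z, rfl⟩, rfl⟩
      exact hA z
    exact h2 (h1 ⟨y, hy, rfl⟩)
  refine ⟨?_, ?_, fun s y _ => hW_iso s y, fun y _ => by rw [hW_one]; rfl,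
    fun s t y _ => ?_, fun B hB hd y _ => hφ_add B hB hd y, fun s E hE y _ => ?_⟩
  · intro s
    refine hmap (W s) (fun z => ?_)
    have := congrArg (fun f => f z) (hQV s)
    exact ⟨V s z, this⟩
  · intro E hE
    refine hmap (φ E) (fun z => ?_)
    rw [hdil E hE]
    exact ⟨ρ E (T (Q z)), rfl⟩
  · have := congrArg (fun f => f y) (hW_mul s t)
    simpa using this
  · have := congrArg (fun f => f y) (hcov s E hE)
    simpa using this
end

section
/- Let (W, φ) be a projective isometric operator-valued system of imprimitivity of (S, Σ) on a complex Banach space X with multiplier ω, and let (V, ρ, Q, T) be a dilation system of (W, φ) on a complex Banach space Z. Then for every s ∈ S, every n ∈ ℕ, all scalars c_1, …, c_n ∈ ℂ, vectors x_1, …, x_n ∈ X and sets E_1, …, E_n ∈ Σ, one has ‖Σ_{i=1}^n c_i ρ(sE_i) T (W_s x_i)‖_Z = ‖Σ_{i=1}^n c_i ρ(E_i) T x_i‖_Z. (Consequently, for an injective dilation system the formula ‖Σ_i c_i φ_{x_i,E_i}‖_d = ‖Σ_i c_i ρ(E_i) T x_i‖_Z defines a norm on span{φ_{x,E}} which is a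 dilation norm of (W, φ).) -/
/-- For a dilation system `(V, ρ, Q, T)` of a projective isometric
operator-valued system of imprimitivity `(W, φ)`, the quantity
`‖Σ_i c_i ρ(sE_i) T (W_s x_i)‖` equals `‖Σ_i c_i ρ(E_i) T x_i‖` for every `s ∈ S`. -/
theorem norm_invariance_for_injective_dilation_norm
    {Ω : Type*} [MeasurableSpace Ω]
    {S : Type*} [Monoid S]
    -- a Σ-measurable S-space
    (act : S → Set Ω → Set Ω)
    (hact_meas : ∀ s (E : Set Ω), MeasurableSet E → MeasurableSet (act s E))
    (hact_mul : ∀ s t (E : Set Ω), MeasurableSet E → act s (act t E) = act (s * t) E)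
    (hact_one : ∀ E : Set Ω, MeasurableSet E → act 1 E = E)
    (hact_empty : ∀ s, act s (∅ : Set Ω) = ∅)
    (hact_univ : ∀ s, act s (Set.univ : Set Ω) = Set.univ)
    (hact_iUnion : ∀ s (E : ℕ → Set Ω), (∀ n, MeasurableSet (E n)) →
      act s (⋃ n, E n) = ⋃ n, act s (E n))
    (hact_iInter : ∀ s (E : ℕ → Set Ω), (∀ n, MeasurableSet (E n)) →
      act s (⋂ n, E n) = ⋂ n, act s (E n))
    {X : Type*} [NormedAddCommGroup X] [NormedSpace ℂ X] [CompleteSpace X]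
    {Z : Type*} [NormedAddCommGroup Z] [NormedSpace ℂ Z] [CompleteSpace Z]
    -- a multiplier ω on S
    (ω : S → S → ℂ)
    (hω_norm : ∀ s t, ‖ω s t‖ = 1)
    (hω_one : ∀ s, ω 1 s = 1 ∧ ω s 1 = 1)
    (hω_cocycle : ∀ s t u, ω s t * ω (s * t) u = ω s (t * u) * ω t u)
    -- a projective isometric operator-valued system of imprimitivity (W, φ) on X
    (W : S → X →L[ℂ] X)
    (hW_iso : ∀ s (x : X), ‖W s x‖ = ‖x‖)
    (hW_one : W 1 = ContinuousLinearMap.id ℂ X)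
    (hW_mul : ∀ s t, (W s).comp (W t) = ω s t • W (s * t))
    (φ : Set Ω → X →L[ℂ] X)
    (hφ_add : ∀ B : ℕ → Set Ω, (∀ i, MeasurableSet (B i)) → Pairwise (Function.onFun Disjoint B) →
      ∀ x : X, HasSum (fun i => φ (B i) x) (φ (⋃ i, B i) x))
    (hcov : ∀ s (E : Set Ω), MeasurableSet E → (W s).comp (φ E) = (φ (act s E)).comp (W s))
    -- a dilation system (V, ρ, Q, T) of (W, φ) on Z
    (V : S → Z →L[ℂ] Z)
    (hV_iso : ∀ s (z : Z), ‖V s z‖ = ‖z‖)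
    (hV_one : V 1 = ContinuousLinearMap.id ℂ Z)
    (hV_mul : ∀ s t, (V s).comp (V t) = ω s t • V (s * t))
    (ρ : Set Ω → Z →L[ℂ] Z)
    (hρ_add : ∀ B : ℕ → Set Ω, (∀ i, MeasurableSet (B i)) → Pairwise (Function.onFun Disjoint B) →
      ∀ z : Z, HasSum (fun i => ρ (B i) z) (ρ (⋃ i, B i) z))
    (hρ_spectral : ∀ A B : Set Ω, MeasurableSet A → MeasurableSet B →
      ρ (A ∩ B) = (ρ A).comp (ρ B))
    (hVρ_cov : ∀ s (E : Set Ω), MeasurableSet E → (V s).comp (ρ E) = (ρ (act s E)).comp (V s))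
    (Q : Z →L[ℂ] X) (T : X →L[ℂ] Z)
    (hdil : ∀ E : Set Ω, MeasurableSet E → φ E = (Q.comp (ρ E)).comp T)
    (hQV : ∀ s, Q.comp (V s) = (W s).comp Q)
    (hVT : ∀ s, (V s).comp T = T.comp (W s)) :
    ∀ (s : S) (n : ℕ) (c : Fin n → ℂ) (x : Fin n → X) (E : Fin n → Set Ω),
      (∀ i, MeasurableSet (E i)) →
      ‖∑ i, c i • ρ (act s (E i)) (T (W s (x i)))‖ = ‖∑ i, c i • ρ (E i) (T (x i))‖ := by
  intro s n c x E hE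
  have hterm : ∀ i, ρ (act s (E i)) (T (W s (x i))) = V s (ρ (E i) (T (x i))) := by
    intro i
    have h1 : T (W s (x i)) = V s (T (x i)) := by
      have := congrArg (fun f => f (x i)) (hVT s); simpa using this.symm
    rw [h1]
    have := congrArg (fun f => f (T (x i))) (hVρ_cov s (E i) (hE i))
    simpa using this.symm
  calc ‖∑ i, c i • ρ (act s (E i)) (T (W s (x i)))‖
      = ‖V s (∑ i, c i • ρ (E i) (T (x i)))‖ := by
        congr 1
        rw [map_sum]
        exact Finset.sum_congr rfl fun i _ => by rw [hterm i, map_smul]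
    _ = ‖∑ i, c i • ρ (E i) (T (x i))‖ := hV_iso s _
end

section
/- Let H be a complex Hilbert space and ϖ a positive operator-valued measure on (Ω, Σ) acting on H. Then for every n ∈ ℕ, all scalars α_1, …, α_n ∈ ℂ, vectors x_1, …, x_n ∈ H and sets E_1, …, E_n ∈ Σ, the number Σ_{i=1}^n Σ_{j=1}^n α_i conj(α_j) ⟨ϖ(E_i ∩ E_j) x_i, x_j⟩ is real and nonnegative. In particular, if the sets E_1, …, E_n are pairwise disjoint, this number equals Σ_{i=1}^n |α_i|² ⟨ϖ(E_i) x_i, x_i⟩. -/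
/-- For a positive operator-valued measure `ϖ` on a complex Hilbert
space `H`, the Gram-type sum `Σ_{i,j} α_i conj(α_j) ⟨ϖ(E_i ∩ E_j) x_i, x_j⟩` is real and
nonnegative; if the sets `E_i` are pairwise disjoint it equals
`Σ_i |α_i|² ⟨ϖ(E_i) x_i, x_i⟩`. -/
theorem povm_gram_sum_nonneg
    {Ω : Type*} [MeasurableSpace Ω]
    {H : Type*} [NormedAddCommGroup H] [InnerProductSpace ℂ H] [CompleteSpace H]
    -- a positive operator-valued measure ϖ on (Ω, Σ) acting on H
    (ϖ : Set Ω → H →L[ℂ] H)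
    (hϖ_add : ∀ B : ℕ → Set Ω, (∀ i, MeasurableSet (B i)) → Pairwise (Function.onFun Disjoint B) →
      ∀ x : H, HasSum (fun i => ϖ (B i) x) (ϖ (⋃ i, B i) x))
    (hϖ_pos : ∀ E : Set Ω, MeasurableSet E → ∀ x : H,
      0 ≤ (inner ℂ (ϖ E x) x : ℂ).re ∧ (inner ℂ (ϖ E x) x : ℂ).im = 0) :
    ∀ (n : ℕ) (α : Fin n → ℂ) (x : Fin n → H) (E : Fin n → Set Ω),
      (∀ i, MeasurableSet (E i)) →
      ((∑ i, ∑ j, α i * (starRingEnd ℂ) (α j) *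
          (inner ℂ (ϖ (E i ∩ E j) (x i)) (x j) : ℂ)).im = 0 ∧
       0 ≤ (∑ i, ∑ j, α i * (starRingEnd ℂ) (α j) *
          (inner ℂ (ϖ (E i ∩ E j) (x i)) (x j) : ℂ)).re) ∧
      ((∀ i j, i ≠ j → Disjoint (E i) (E j)) →
        ∑ i, ∑ j, α i * (starRingEnd ℂ) (α j) *
            (inner ℂ (ϖ (E i ∩ E j) (x i)) (x j) : ℂ)
          = ∑ i, (((‖α i‖ : ℝ) : ℂ) ^ 2) * (inner ℂ (ϖ (E i) (x i)) (x i) : ℂ)) := by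
  classical
  -- `ϖ ∅ = 0`
  have hzero : ∀ x : H, ϖ ∅ x = 0 := by
    intro x
    have h := hϖ_add (fun _ => ∅) (fun _ => MeasurableSet.empty)
      (fun i j hij => by simp [Function.onFun]) x
    have hs : Summable (fun _ : ℕ => ϖ ∅ x) := h.summable
    exact (summable_const_iff _).mp hs
  -- finite (pair) additivity
  have hpair : ∀ A B : Set Ω, MeasurableSet A → MeasurableSet B → Disjoint A B →
      ∀ x : H, ϖ (A ∪ B) x = ϖ A x + ϖ B x := by
    intro A B hA hB hAB x
    set f : ℕ → Set Ω := fun i => if i = 0 then A else if i = 1 then B else ∅ with hf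
    have hmeas : ∀ i, MeasurableSet (f i) := by
      intro i; dsimp only [f]; split_ifs
      · exact hA
      · exact hB
      · exact MeasurableSet.empty
    have hdisj : Pairwise (Function.onFun Disjoint f) := by
      intro i j hij
      dsimp only [Function.onFun, f]
      split_ifs with h1 h2 h3 h4 h5 <;>
        first
          | exact absurd (h1.trans h3.symm) hij
          | exact absurd (h2.trans h5.symm) hij
          | exact hAB
          | exact hAB.symm
          | exact Set.disjoint_empty _
          | exact Set.empty_disjoint _
          | omega
    have h := hϖ_add f hmeas hdisj x
    have hU : (⋃ i, f i) = A ∪ B := by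
      ext ω
      simp only [Set.mem_iUnion, Set.mem_union]
      constructor
      · rintro ⟨i, hi⟩
        dsimp only [f] at hi
        split_ifs at hi with h1 h2
        · exact Or.inl hi
        · exact Or.inr hi
        · exact absurd hi (Set.notMem_empty ω)
      · rintro (h | h)
        · exact ⟨0, by simp [f, h]⟩
        · exact ⟨1, by simp [f, h]⟩
    have h2 : HasSum (fun i => ϖ (f i) x) (ϖ A x + ϖ B x) := by
      have hne : ∀ b ∉ ({0, 1} : Finset ℕ), ϖ (f b) x = 0 := by
        intro b hb
        simp only [Finset.mem_insert, Finset.mem_singleton, not_or] at hb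
        dsimp only [f]
        rw [if_neg hb.1, if_neg hb.2]
        exact hzero x
      have := hasSum_sum_of_ne_finset_zero (L := SummationFilter.unconditional ℕ) hne
      have hsum : ∑ b ∈ ({0, 1} : Finset ℕ), ϖ (f b) x = ϖ A x + ϖ B x := by
        rw [Finset.sum_pair (by norm_num)]
        simp [f]
      rwa [hsum] at this
    rw [hU] at h
    exact h.unique h2
  intro n α x E hE
  -- atoms
  set A : Finset (Fin n) → Set Ω := fun S => ⋂ i, (if i ∈ S then E i else (E i)ᶜ) with hA
  have hmemA : ∀ (ω : Ω) (S : Finset (Fin n)), ω ∈ A S ↔ ∀ i, (ω ∈ E i ↔ i ∈ S) := by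
    intro ω S
    simp only [A, Set.mem_iInter]
    refine forall_congr' fun i => ?_
    split_ifs with h <;> simp [h]
  have hAmeas : ∀ S, MeasurableSet (A S) := by
    intro S
    exact MeasurableSet.iInter fun i => by split_ifs; exacts [hE i, (hE i).compl]
  have hAdisj : ∀ S T, S ≠ T → Disjoint (A S) (A T) := by
    intro S T hST
    rw [Set.disjoint_left]
    intro ω hS hT
    rw [hmemA] at hS hT
    apply hST
    ext i
    rw [← hS i, hT i]
  -- finite additivity over finsets of atoms
  have hfin : ∀ (s : Finset (Finset (Fin n))) (y : H),
      ϖ (⋃ S ∈ s, A S) y = ∑ S ∈ s, ϖ (A S) y := by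
    intro s
    induction s using Finset.induction with
    | empty => intro y; simp [hzero y]
    | @insert a s ha ih =>
      intro y
      rw [Finset.set_biUnion_insert]
      rw [hpair (A a) (⋃ S ∈ s, A S) (hAmeas a)
          (MeasurableSet.iUnion fun S => MeasurableSet.iUnion fun _ => hAmeas S)
          (by
            rw [Set.disjoint_iUnion₂_right]
            intro S hS
            exact hAdisj a S (fun h => ha (h ▸ hS))) y,
        ih y, Finset.sum_insert ha]
  -- decomposition of intersections into atoms
  have hdecomp : ∀ i j : Fin n,
      E i ∩ E j = ⋃ S ∈ Finset.univ.filter (fun S => i ∈ S ∧ j ∈ S), A S := by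
    intro i j
    ext ω
    simp only [Set.mem_inter_iff, Set.mem_iUnion, Finset.mem_filter, Finset.mem_univ,
      true_and, exists_prop]
    constructor
    · rintro ⟨hi, hj⟩
      refine ⟨Finset.univ.filter (fun k => ω ∈ E k), ⟨by simp [hi], by simp [hj]⟩, ?_⟩
      rw [hmemA]
      intro k
      simp
    · rintro ⟨S, ⟨hiS, hjS⟩, hω⟩
      rw [hmemA] at hω
      exact ⟨(hω i).mpr hiS, (hω j).mpr hjS⟩
  have step1 : ∀ i j : Fin n, (inner ℂ (ϖ (E i ∩ E j) (x i)) (x j) : ℂ)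
      = ∑ S ∈ Finset.univ.filter (fun S => i ∈ S ∧ j ∈ S),
          (inner ℂ (ϖ (A S) (x i)) (x j) : ℂ) := by
    intro i j
    rw [hdecomp i j, hfin, sum_inner]
  -- the key Gram identity
  have key : (∑ i, ∑ j, α i * (starRingEnd ℂ) (α j) *
        (inner ℂ (ϖ (E i ∩ E j) (x i)) (x j) : ℂ))
      = ∑ S : Finset (Fin n),
          (inner ℂ (ϖ (A S) (∑ i ∈ S, (starRingEnd ℂ) (α i) • x i))
            (∑ j ∈ S, (starRingEnd ℂ) (α j) • x j) : ℂ) := by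
    have rhs : ∀ S : Finset (Fin n),
        (inner ℂ (ϖ (A S) (∑ i ∈ S, (starRingEnd ℂ) (α i) • x i))
          (∑ j ∈ S, (starRingEnd ℂ) (α j) • x j) : ℂ)
        = ∑ i ∈ S, ∑ j ∈ S, α i * (starRingEnd ℂ) (α j) *
            (inner ℂ (ϖ (A S) (x i)) (x j) : ℂ) := by
      intro S
      rw [map_sum, sum_inner]
      refine Finset.sum_congr rfl fun i _ => ?_
      rw [inner_sum]
      refine Finset.sum_congr rfl fun j _ => ?_
      rw [map_smul, inner_smul_left, inner_smul_right]
      simp only [Complex.conj_conj]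
      ring
    simp_rw [rhs, step1, Finset.mul_sum, Finset.sum_filter]
    simp only [Finset.sum_comm (s := (Finset.univ : Finset (Fin n)))
      (t := (Finset.univ : Finset (Finset (Fin n))))]
    refine Finset.sum_congr rfl fun S _ => ?_
    have hrow : ∀ i : Fin n,
        (∑ j, if i ∈ S ∧ j ∈ S then
            α i * (starRingEnd ℂ) (α j) * (inner ℂ (ϖ (A S) (x i)) (x j) : ℂ) else 0)
        = if i ∈ S then
            ∑ j ∈ S, α i * (starRingEnd ℂ) (α j) * (inner ℂ (ϖ (A S) (x i)) (x j) : ℂ)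
          else 0 := by
      intro i
      split_ifs with hi
      · simp only [hi, true_and]
        rw [Finset.sum_ite_mem, Finset.univ_inter]
      · simp [hi]
    simp_rw [hrow]
    rw [Finset.sum_ite_mem, Finset.univ_inter]
  refine ⟨⟨?_, ?_⟩, ?_⟩
  · rw [key, Complex.im_sum]
    exact Finset.sum_eq_zero fun S _ => (hϖ_pos (A S) (hAmeas S) _).2
  · rw [key, Complex.re_sum]
    exact Finset.sum_nonneg fun S _ => (hϖ_pos (A S) (hAmeas S) _).1
  · intro hdis
    refine Finset.sum_congr rfl fun i _ => ?_
    rw [Finset.sum_eq_single_of_mem i (Finset.mem_univ i)]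
    · rw [Set.inter_self, Complex.mul_conj]
      congr 1
      rw [← Complex.sq_norm]
      norm_cast
    · intro j _ hji
      have h0 : E i ∩ E j = ∅ :=
        Set.disjoint_iff_inter_eq_empty.mp (hdis i j (Ne.symm hji))
      rw [h0, hzero]
      simp
end

section
/- Let H be a complex Hilbert space and ϖ a positive operator-valued measure on (Ω, Σ) acting on H. Let E_1, …, E_n ∈ Σ be pairwise disjoint, α_1, …, α_n ∈ ℂ and x_1, …, x_n ∈ H. If Σ_{i=1}^n |α_i|² ⟨ϖ(E_i) x_i, x_i⟩ = 0, then Σ_{i=1}^n α_i ϖ(E ∩ E_i) x_i = 0 for every E ∈ Σ; that is, the vector measure M(E) = Σ_{i=1}^n α_i ϖ(E ∩ E_i) x_i is identically zero. -/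
open ContinuousLinearMap in
theorem pos_op_apply_eq_zero_of_inner_self_zero {H : Type*} [NormedAddCommGroup H]
    [InnerProductSpace ℂ H] [CompleteSpace H]
    (T : H →L[ℂ] H) (hT : T.IsPositive) (x : H) (hx : (inner ℂ (T x) x : ℂ) = 0) :
    T x = 0 := by
  set y := T x with hy
  have hadj : ∀ u v : H, (inner ℂ (T u) v : ℂ) = inner ℂ u (T v) := by
    intro u v
    have h := ContinuousLinearMap.adjoint_inner_left T v u
    rwa [hT.isSelfAdjoint.adjoint_eq] at h
  have hTyx : (inner ℂ (T y) x : ℂ) = (‖T x‖:ℂ)^2 := by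
    rw [hadj y x, ← hy, inner_self_eq_norm_sq_to_K]; norm_num
  have hTxy : (inner ℂ (T x) y : ℂ) = (‖T x‖:ℂ)^2 := by
    rw [hy, inner_self_eq_norm_sq_to_K]; norm_num
  have key : ∀ t : ℝ, 0 ≤ 2 * t * ‖T x‖^2 + t^2 * (inner ℂ (T y) y : ℂ).re := by
    intro t
    have h := hT.2 (x + (t:ℂ) • y)
    rw [ContinuousLinearMap.reApplyInnerSelf_apply] at h
    have expand : (inner ℂ (T (x + (t:ℂ)•y)) (x + (t:ℂ)•y) : ℂ)
        = (t:ℂ) * inner ℂ (T y) x + (t:ℂ) * inner ℂ (T x) y + (t:ℂ)^2 * inner ℂ (T y) y := by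
      simp only [map_add, map_smul, inner_add_left, inner_add_right, inner_smul_left,
        inner_smul_right, (show inner ℂ (T x) x = 0 from hx), Complex.conj_ofReal]
      ring
    rw [expand, hTyx, hTxy] at h
    convert h using 1
    simp [← Complex.ofReal_pow, Complex.add_re, Complex.mul_re, Complex.ofReal_re,
      Complex.ofReal_im]
    ring
  set a := (inner ℂ (T y) y : ℂ).re with ha
  have ha0 : 0 ≤ a := by exact (Complex.nonneg_iff.mp (hT.inner_nonneg_left y)).1
  set b := ‖T x‖^2 with hb
  have hb0 : 0 ≤ b := sq_nonneg _
  have hbz : b = 0 := by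
    by_contra hne
    have hbpos : 0 < b := lt_of_le_of_ne hb0 (Ne.symm hne)
    have ha1 : (0:ℝ) < a + 1 := by linarith
    set c := (a+1)⁻¹ with hcdef
    have hc : c * (a+1) = 1 := inv_mul_cancel₀ ha1.ne'
    have hcpos : 0 < c := inv_pos.mpr ha1
    have h := key (-(b*c))
    have h' : 0 ≤ -2*b^2*c + b^2*c^2*a := by nlinarith [h]
    have h2 : 0 ≤ (-2*b^2*c + b^2*c^2*a) * ((a+1)*(a+1)) :=
      mul_nonneg h' (by positivity)
    have hexp : (-2*b^2*c + b^2*c^2*a) * ((a+1)*(a+1)) = -(b^2*(a+2)) := by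
      linear_combination (-2*b^2*(a+1) + b^2*a*(c*(a+1)+1)) * hc
    rw [hexp] at h2
    nlinarith [h2, hbpos, ha0]
  have : ‖T x‖ = 0 := by
    have := pow_eq_zero_iff (n := 2) (by norm_num) |>.mp hbz
    exact this
  simpa using this

section aux
variable {Ω : Type*} [MeasurableSpace Ω]
    {H : Type*} [NormedAddCommGroup H] [InnerProductSpace ℂ H] [CompleteSpace H]
    (ϖ : Set Ω → H →L[ℂ] H)
    (hϖ_add : ∀ B : ℕ → Set Ω, (∀ i, MeasurableSet (B i)) → Pairwise (Function.onFun Disjoint B) →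
      ∀ x : H, HasSum (fun i => ϖ (B i) x) (ϖ (⋃ i, B i) x))

include hϖ_add

theorem povm_empty (x : H) : ϖ ∅ x = 0 := by
  have h := hϖ_add (fun _ => ∅) (fun _ => MeasurableSet.empty)
    (fun i j hij => by simp [Function.onFun]) x
  have h2 := h.summable.tendsto_atTop_zero
  exact tendsto_const_nhds_iff.mp h2

theorem povm_pair_add {A B : Set Ω} (hA : MeasurableSet A) (hB : MeasurableSet B)
    (hAB : Disjoint A B) (x : H) : ϖ (A ∪ B) x = ϖ A x + ϖ B x := by
  set f : ℕ → Set Ω := fun i => if i = 0 then A else if i = 1 then B else ∅ with hf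
  have hmeas : ∀ i, MeasurableSet (f i) := by
    intro i; simp only [hf]; split_ifs <;> simp [hA, hB]
  have hdisj : Pairwise (Function.onFun Disjoint f) := by
    intro i j hij
    simp only [Function.onFun, hf]
    split_ifs <;> simp_all [hAB, hAB.symm]
  have hsum := hϖ_add f hmeas hdisj x
  have hunion : (⋃ i, f i) = A ∪ B := by
    ext ω
    simp only [Set.mem_iUnion, Set.mem_union, hf]
    constructor
    · rintro ⟨i, hi⟩
      split_ifs at hi with h1 h2
      · exact Or.inl hi
      · exact Or.inr hi
      · simp at hi
    · rintro (h | h)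
      · exact ⟨0, by simp [h]⟩
      · exact ⟨1, by simp [h]⟩
  have hsum2 : HasSum (fun i => ϖ (f i) x) (ϖ A x + ϖ B x) := by
    have := hasSum_sum_of_ne_finset_zero (s := ({0, 1} : Finset ℕ)) (L := SummationFilter.unconditional ℕ)
      (f := fun i => ϖ (f i) x) (by
        intro b hb
        simp only [Finset.mem_insert, Finset.mem_singleton, not_or] at hb
        have : f b = ∅ := by simp [hf, hb.1, hb.2]
        show ϖ (f b) x = 0
        rw [this]
        exact povm_empty ϖ hϖ_add x)
    simpa [hf] using this
  rw [hunion] at hsum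
  exact hsum.unique hsum2

end aux

/-- For a positive operator-valued measure `ϖ` on a complex Hilbert
space and pairwise disjoint sets `E_i`, if `Σ_i |α_i|² ⟨ϖ(E_i) x_i, x_i⟩ = 0`, then the
vector measure `M(E) = Σ_i α_i ϖ(E ∩ E_i) x_i` vanishes identically. -/
theorem povm_null_gram_sum_implies_zero_vector_measure
    {Ω : Type*} [MeasurableSpace Ω]
    {H : Type*} [NormedAddCommGroup H] [InnerProductSpace ℂ H] [CompleteSpace H]
    -- a positive operator-valued measure ϖ on (Ω, Σ) acting on H
    (ϖ : Set Ω → H →L[ℂ] H)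
    (hϖ_add : ∀ B : ℕ → Set Ω, (∀ i, MeasurableSet (B i)) → Pairwise (Function.onFun Disjoint B) →
      ∀ x : H, HasSum (fun i => ϖ (B i) x) (ϖ (⋃ i, B i) x))
    (hϖ_pos : ∀ E : Set Ω, MeasurableSet E → ∀ x : H,
      0 ≤ (inner ℂ (ϖ E x) x : ℂ).re ∧ (inner ℂ (ϖ E x) x : ℂ).im = 0)
    (n : ℕ) (α : Fin n → ℂ) (x : Fin n → H) (E : Fin n → Set Ω)
    (hE_meas : ∀ i, MeasurableSet (E i))
    (hE_disj : ∀ i j, i ≠ j → Disjoint (E i) (E j))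
    (hzero : ∑ i, ((‖α i‖ : ℂ) ^ 2) * (inner ℂ (ϖ (E i) (x i)) (x i) : ℂ) = 0) :
    ∀ F : Set Ω, MeasurableSet F → ∑ i, α i • ϖ (F ∩ E i) (x i) = 0 := by
  intro F hF
  -- each term of `hzero` is a nonnegative real, hence each vanishes
  have hterm_re : ∀ i, (((‖α i‖ : ℂ) ^ 2) *
      (inner ℂ (ϖ (E i) (x i)) (x i) : ℂ)).re
      = (‖α i‖) ^ 2 * (inner ℂ (ϖ (E i) (x i)) (x i) : ℂ).re := by
    intro i
    rw [← Complex.ofReal_pow, Complex.re_ofReal_mul]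
  have hre_nonneg : ∀ i ∈ Finset.univ, (0:ℝ) ≤
      (((‖α i‖ : ℂ) ^ 2) * (inner ℂ (ϖ (E i) (x i)) (x i) : ℂ)).re := by
    intro i _
    rw [hterm_re]
    exact mul_nonneg (sq_nonneg _) (hϖ_pos (E i) (hE_meas i) (x i)).1
  have hre_sum : ∑ i, (((‖α i‖ : ℂ) ^ 2) *
      (inner ℂ (ϖ (E i) (x i)) (x i) : ℂ)).re = 0 := by
    rw [← Complex.re_sum, hzero, Complex.zero_re]
  have hre_zero := (Finset.sum_eq_zero_iff_of_nonneg hre_nonneg).mp hre_sum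
  apply Finset.sum_eq_zero
  intro i _
  by_cases hαi : α i = 0
  · simp [hαi]
  · suffices h : ϖ (F ∩ E i) (x i) = 0 by rw [h, smul_zero]
    -- the inner product ⟨ϖ(E i) x i, x i⟩ vanishes
    have hEi_re : (inner ℂ (ϖ (E i) (x i)) (x i) : ℂ).re = 0 := by
      have h0 := hre_zero i (Finset.mem_univ i)
      rw [hterm_re] at h0
      have habs : (0:ℝ) < (‖α i‖) ^ 2 :=
        pow_pos (norm_pos_iff.mpr hαi) 2
      exact (mul_eq_zero.mp h0).resolve_left (ne_of_gt habs)
    -- decompose E i = (F ∩ E i) ∪ (E i \ F)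
    have hsplit : E i = (F ∩ E i) ∪ (E i \ F) := by
      ext ω; simp only [Set.mem_inter_iff, Set.mem_union, Set.mem_diff]; tauto
    have hdisj2 : Disjoint (F ∩ E i) (E i \ F) := by
      rw [Set.disjoint_left]
      rintro ω ⟨hωF, _⟩ ⟨_, hωF'⟩
      exact hωF' hωF
    have hadd : ϖ (E i) (x i) = ϖ (F ∩ E i) (x i) + ϖ (E i \ F) (x i) := by
      conv_lhs => rw [hsplit]
      exact povm_pair_add ϖ hϖ_add (hF.inter (hE_meas i)) ((hE_meas i).diff hF) hdisj2 (x i)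
    have hsum_re : (inner ℂ (ϖ (F ∩ E i) (x i)) (x i) : ℂ).re
        + (inner ℂ (ϖ (E i \ F) (x i)) (x i) : ℂ).re = 0 := by
      have := hEi_re
      rw [hadd, inner_add_left, Complex.add_re] at this
      exact this
    have h1 := (hϖ_pos (F ∩ E i) (hF.inter (hE_meas i)) (x i)).1
    have h2 := (hϖ_pos (E i \ F) ((hE_meas i).diff hF) (x i)).1
    have hre0 : (inner ℂ (ϖ (F ∩ E i) (x i)) (x i) : ℂ).re = 0 := by linarith
    have him0 := (hϖ_pos (F ∩ E i) (hF.inter (hE_meas i)) (x i)).2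
    have hinner0 : (inner ℂ (ϖ (F ∩ E i) (x i)) (x i) : ℂ) = 0 :=
      Complex.ext (by simp [hre0]) (by simp [him0])
    -- ϖ (F ∩ E i) is a positive operator
    have hpos : (ϖ (F ∩ E i)).IsPositive := by
      rw [ContinuousLinearMap.isPositive_iff_complex]
      intro u
      refine ⟨Complex.ext (by simp) ?_, (hϖ_pos (F ∩ E i) (hF.inter (hE_meas i)) u).1⟩
      simp [(hϖ_pos (F ∩ E i) (hF.inter (hE_meas i)) u).2]
    exact pos_op_apply_eq_zero_of_inner_self_zero _ hpos _ hinner0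
end

section
/- Let X be a complex Banach space, G a countable discrete group, and I an isometric representation of G on X (I_g I_h = I_{gh}, I_e = Id, each I_g an isometry). Let x ∈ X and f ∈ X* be such that {I_g x, I*_{g^{-1}} f}_{g∈G} is a framing for X, and for each subset E ⊆ G define φ(E) ∈ B(X) by φ(E)y = Σ_{h∈E} ⟨y, I*_{h^{-1}} f⟩ I_h x (the series converging unconditionally since it is a subseries of the framing expansion of y). Then I_g φ(E) I_{g^{-1}} = φ(gE) for all g ∈ G and all E ⊆ G, where gE = {gh : h ∈ E}; moreover φ is countably additive in the strong operator topology, so (I, φ) is an operator-valued isometric system of imprimitivity. -/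
set_option maxHeartbeats 1000000 in
/-- A framing `{I_g x, I*_{g⁻¹} f}_{g∈G}` induced by an isometric
representation `I` of a countable discrete group `G` on a Banach space `X` gives rise to
an operator-valued measure `φ(E) = Σ_{h∈E} I_h x ⊗ I*_{h⁻¹} f` satisfying
`I_g φ(E) I_{g⁻¹} = φ(gE)`; together with its countable additivity, `(I, φ)` is an
operator-valued isometric system of imprimitivity. -/
theorem framing_induced_system_of_imprimitivity
    {X : Type*} [NormedAddCommGroup X] [NormedSpace ℂ X] [CompleteSpace X]
    {G : Type*} [Group G] [Countable G]
    -- an isometric representation I of G on X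
    (I : G → X →L[ℂ] X)
    (hI_iso : ∀ g (v : X), ‖I g v‖ = ‖v‖)
    (hI_one : I 1 = ContinuousLinearMap.id ℂ X)
    (hI_mul : ∀ g h, (I g).comp (I h) = I (g * h))
    -- a framing {I_g x, I*_{g⁻¹} f}_{g∈G} for X
    (x : X) (f : X →L[ℂ] ℂ)
    (hframe : ∀ v : X, HasSum (fun g : G => f (I g⁻¹ v) • I g x) v)
    -- the induced operator-valued measure φ
    (φ : Set G → X →L[ℂ] X)
    (hφ : ∀ (E : Set G) (v : X),
      HasSum (fun h : E => f (I (h : G)⁻¹ v) • I (h : G) x) (φ E v)) :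
    -- the covariance relation I_g φ(E) I_{g⁻¹} = φ(gE)
    (∀ (g : G) (E : Set G),
      (I g).comp ((φ E).comp (I g⁻¹)) = φ ((fun h => g * h) '' E)) ∧
    -- φ is countably additive in the strong operator topology
    (∀ B : ℕ → Set G, Pairwise (Function.onFun Disjoint B) →
      ∀ v : X, HasSum (fun i => φ (B i) v) (φ (⋃ i, B i) v)) := by

  constructor
  · intro g E
    ext v
    simp only [ContinuousLinearMap.comp_apply]
    have h1 : HasSum (fun h : E => (I g) (f (I (h : G)⁻¹ ((I g⁻¹) v)) • I (h : G) x))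
        ((I g) (φ E ((I g⁻¹) v))) := (I g).hasSum (hφ E ((I g⁻¹) v))
    have hinj : Function.Injective (fun h : G => g * h) := mul_right_injective g
    let e : E ≃ ((fun h : G => g * h) '' E) := Equiv.Set.imageOfInjOn _ E hinj.injOn
    have h2 : HasSum (fun h : E => f (I ((e h : G))⁻¹ v) • I (e h : G) x)
        (φ ((fun h => g * h) '' E) v) :=
      (Equiv.hasSum_iff e).2 (hφ ((fun h => g * h) '' E) v)
    have key : ∀ h : E, (I g) (f (I (h : G)⁻¹ ((I g⁻¹) v)) • I (h : G) x)
        = f (I ((e h : G))⁻¹ v) • I (e h : G) x := by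
      intro h
      have he : (e h : G) = g * (h : G) := rfl
      have hc : f (I (h : G)⁻¹ ((I g⁻¹) v)) = f (I ((g * (h : G)))⁻¹ v) := by
        rw [mul_inv_rev, ← hI_mul]
        rfl
      rw [he, map_smul, hc]
      congr 1
      calc (I g) (I (h : G) x) = ((I g).comp (I (h : G))) x := rfl
        _ = (I (g * (h : G))) x := by rw [hI_mul]
    have h1' : HasSum (fun h : E => f (I ((e h : G))⁻¹ v) • I (e h : G) x)
        ((I g) (φ E ((I g⁻¹) v))) := by
      rw [← funext key]; exact h1
    exact h1'.unique h2
  · intro B hB v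
    let e : (Σ i, B i) ≃ (⋃ i, B i) :=
      Equiv.ofBijective _ (Set.sigmaToiUnion_bijective B hB)
    have hU : HasSum (fun p : Σ i, B i => f (I ((e p : G))⁻¹ v) • I (e p : G) x)
        (φ (⋃ i, B i) v) :=
      (Equiv.hasSum_iff e).2 (hφ (⋃ i, B i) v)
    refine HasSum.sigma hU ?_
    intro i
    have hcoe : ∀ c : B i, (e ⟨i, c⟩ : G) = (c : G) := fun c => rfl
    simp only [hcoe]
    exact hφ (B i) v
end

section
/- Let G be a group acting on a σ-field Σ of subsets of Ω as a Σ-measurable G-space, X a complex Banach space, and (W, φ) a projective isometric operator-valued system of imprimitivity of (G, Σ) on X with multiplier ω. Then for every s ∈ G, every n ∈ ℕ, and all c_1, …, c_n ∈ ℂ, x_1, …, x_n ∈ X, E_1, …, E_n ∈ Σ, one has sup_{F∈Σ} ‖Σ_{j=1}^n c_j φ(sE_j ∩ F) W_s x_j‖ = sup_{F∈Σ} ‖Σ_{j=1}^n c_j φ(E_j ∩ F) x_j‖; that is, the operator V_s defined on span{φ_{x,E}} by V_s(φ_{x,E}) = φ_{W_s x, sE} is an isometry with respect to the minimal dilation norm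 ‖Σ_j c_j φ_{x_j,E_j}‖_α = sup_{F∈Σ} ‖Σ_j c_j φ(E_j ∩ F) x_j‖. -/
set_option maxHeartbeats 1000000 in
/-- For a projective isometric operator-valued system of imprimitivity
`(W, φ)` of a group `G` acting on `(Ω, Σ)`, the operator `V_s : φ_{x,E} ↦ φ_{W_s x, sE}`
is isometric with respect to the minimal dilation norm
`‖Σ_j c_j φ_{x_j,E_j}‖_α = sup_{F∈Σ} ‖Σ_j c_j φ(E_j ∩ F) x_j‖`. -/
theorem minimal_dilation_norm_isometry
    {Ω : Type*} [MeasurableSpace Ω]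
    {G : Type*} [Group G]
    -- a Σ-measurable G-space
    (act : G → Set Ω → Set Ω)
    (hact_meas : ∀ s (E : Set Ω), MeasurableSet E → MeasurableSet (act s E))
    (hact_mul : ∀ s t (E : Set Ω), MeasurableSet E → act s (act t E) = act (s * t) E)
    (hact_one : ∀ E : Set Ω, MeasurableSet E → act 1 E = E)
    (hact_empty : ∀ s, act s (∅ : Set Ω) = ∅)
    (hact_univ : ∀ s, act s (Set.univ : Set Ω) = Set.univ)
    (hact_iUnion : ∀ s (E : ℕ → Set Ω), (∀ n, MeasurableSet (E n)) →
      act s (⋃ n, E n) = ⋃ n, act s (E n))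
    (hact_iInter : ∀ s (E : ℕ → Set Ω), (∀ n, MeasurableSet (E n)) →
      act s (⋂ n, E n) = ⋂ n, act s (E n))
    {X : Type*} [NormedAddCommGroup X] [NormedSpace ℂ X] [CompleteSpace X]
    -- a multiplier ω on G
    (ω : G → G → ℂ)
    (hω_norm : ∀ s t, ‖ω s t‖ = 1)
    (hω_one : ∀ s, ω 1 s = 1 ∧ ω s 1 = 1)
    (hω_cocycle : ∀ s t u, ω s t * ω (s * t) u = ω s (t * u) * ω t u)
    -- a projective isometric representation W of G on X with multiplier ω
    (W : G → X →L[ℂ] X)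
    (hW_iso : ∀ s (x : X), ‖W s x‖ = ‖x‖)
    (hW_one : W 1 = ContinuousLinearMap.id ℂ X)
    (hW_mul : ∀ s t, (W s).comp (W t) = ω s t • W (s * t))
    -- a B(X)-valued measure φ on (Ω, Σ)
    (φ : Set Ω → X →L[ℂ] X)
    (hφ_add : ∀ B : ℕ → Set Ω, (∀ i, MeasurableSet (B i)) → Pairwise (Function.onFun Disjoint B) →
      ∀ x : X, HasSum (fun i => φ (B i) x) (φ (⋃ i, B i) x))
    -- the covariance relation making (W, φ) a system of imprimitivity
    (hcov : ∀ s (E : Set Ω), MeasurableSet E → (W s).comp (φ E) = (φ (act s E)).comp (W s)) :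
    ∀ (s : G) (n : ℕ) (c : Fin n → ℂ) (x : Fin n → X) (E : Fin n → Set Ω),
      (∀ j, MeasurableSet (E j)) →
      (⨆ F : {F : Set Ω // MeasurableSet F},
          ‖∑ j, c j • φ (act s (E j) ∩ F.1) (W s (x j))‖)
        = ⨆ F : {F : Set Ω // MeasurableSet F}, ‖∑ j, c j • φ (E j ∩ F.1) (x j)‖ := by

  intro s n c x E hE
  -- binary intersection commutes with the action
  have hact_inter : ∀ (t : G) (A B : Set Ω), MeasurableSet A → MeasurableSet B →
      act t (A ∩ B) = act t A ∩ act t B := by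
    intro t A B hA hB
    have h := hact_iInter t (fun m => if m = 0 then A else B)
      (fun m => by by_cases h : m = 0 <;> simp [h, hA, hB])
    have h1 : (⋂ m, if m = 0 then A else B) = A ∩ B := by
      ext y
      simp only [Set.mem_iInter, Set.mem_inter_iff]
      constructor
      · intro hy; exact ⟨by simpa using hy 0, by simpa using hy 1⟩
      · intro hy m; by_cases h : m = 0 <;> simp [h, hy.1, hy.2]
    have h2 : (⋂ m, act t (if m = 0 then A else B)) = act t A ∩ act t B := by
      ext y
      simp only [Set.mem_iInter, Set.mem_inter_iff]
      constructor
      · intro hy; exact ⟨by simpa using hy 0, by simpa using hy 1⟩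
      · intro hy m; by_cases h : m = 0 <;> simp [h, hy.1, hy.2]
    rw [h1, h2] at h
    exact h
  have hinv : ∀ (F : Set Ω), MeasurableSet F → act s (act s⁻¹ F) = F := by
    intro F hF
    rw [hact_mul s s⁻¹ F hF, mul_inv_cancel, hact_one F hF]
  -- the equivalence F ↦ s⁻¹ F on measurable sets
  let e : {F : Set Ω // MeasurableSet F} ≃ {F : Set Ω // MeasurableSet F} :=
    { toFun := fun F => ⟨act s⁻¹ F.1, hact_meas _ _ F.2⟩
      invFun := fun F => ⟨act s F.1, hact_meas _ _ F.2⟩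
      left_inv := fun F => Subtype.ext (hinv F.1 F.2)
      right_inv := fun F => Subtype.ext (by
        show act s⁻¹ (act s F.1) = F.1
        rw [hact_mul s⁻¹ s F.1 F.2, inv_mul_cancel, hact_one F.1 F.2]) }
  have key : ∀ F : {F : Set Ω // MeasurableSet F},
      ‖∑ j, c j • φ (act s (E j) ∩ F.1) (W s (x j))‖
        = ‖∑ j, c j • φ (E j ∩ (e F).1) (x j)‖ := by
    intro F
    have hterm : ∀ j, φ (act s (E j) ∩ F.1) (W s (x j))
        = W s (φ (E j ∩ act s⁻¹ F.1) (x j)) := by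
      intro j
      have hm : MeasurableSet (E j ∩ act s⁻¹ F.1) :=
        (hE j).inter (hact_meas _ _ F.2)
      have hset : act s (E j ∩ act s⁻¹ F.1) = act s (E j) ∩ F.1 := by
        rw [hact_inter s _ _ (hE j) (hact_meas _ _ F.2), hinv F.1 F.2]
      have h := hcov s (E j ∩ act s⁻¹ F.1) hm
      rw [hset] at h
      exact (congrArg (fun T => T (x j)) h).symm
    calc ‖∑ j, c j • φ (act s (E j) ∩ F.1) (W s (x j))‖
        = ‖W s (∑ j, c j • φ (E j ∩ act s⁻¹ F.1) (x j))‖ := by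
          rw [map_sum]
          congr 1
          refine Finset.sum_congr rfl fun j _ => ?_
          rw [hterm j, (W s).map_smul]
      _ = ‖∑ j, c j • φ (E j ∩ (e F).1) (x j)‖ := hW_iso s _
  have h2 := Equiv.iSup_comp
    (g := fun F : {F : Set Ω // MeasurableSet F} => ‖∑ j, c j • φ (E j ∩ F.1) (x j)‖) e
  rw [← h2]
  exact iSup_congr key
end
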